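/- For R > 0, μ > 0 and n ≥ 2, the polynomial Φ_n is convex on the quadrant [0,∞)², i.e. for all X, Y ∈ [0,∞)² and t ∈ [0,1], Φ_n(tX + (1-t)Y) ≤ t Φ_n(X) + (1-t) Φ_n(Y). -/

import Mathlib

open Matrix Finset
set_option maxHeartbeats 1000000

/-- `α_{k,n} = R (k + μ (n - k - 1))`. -/
noncomputable def alph (R mu : ℝ) (n k : ℕ) : ℝ := R * ((k : ℝ) + mu * ((n : ℝ) - (k : ℝ) - 1))

/-- `a_{j,n}`. -/
noncomputable def coefa (R mu : ℝ) (n j : ℕ) : ℝ :=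
  (n.choose j : ℝ) * ∏ k ∈ Finset.range j, ((k : ℝ) + alph R mu n k) / alph R mu n k

/-- `Φ_n(X) = Σ_{j=0}^n a_{j,n} X₁^j X₂^{n-j}`. -/
noncomputable def Phi (R mu : ℝ) (n : ℕ) (X : ℝ × ℝ) : ℝ :=
  ∑ j ∈ Finset.range (n + 1), coefa R mu n j * X.1 ^ j * X.2 ^ (n - j)

/-- first partial derivative of `Φ_n` in the first variable. -/
noncomputable def d1Phi (R mu : ℝ) (n : ℕ) (X : ℝ × ℝ) : ℝ :=
  deriv (fun t => Phi R mu n (t, X.2)) X.1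

/-- first partial derivative of `Φ_n` in the second variable. -/
noncomputable def d2Phi (R mu : ℝ) (n : ℕ) (X : ℝ × ℝ) : ℝ :=
  deriv (fun t => Phi R mu n (X.1, t)) X.2

/-- `∂₁²Φ_n`. -/
noncomputable def d11Phi (R mu : ℝ) (n : ℕ) (X : ℝ × ℝ) : ℝ :=
  deriv (fun t => d1Phi R mu n (t, X.2)) X.1

/-- `∂₁∂₂Φ_n`. -/
noncomputable def d12Phi (R mu : ℝ) (n : ℕ) (X : ℝ × ℝ) : ℝ :=
  deriv (fun t => d2Phi R mu n (t, X.2)) X.1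

/-- `∂₂²Φ_n`. -/
noncomputable def d22Phi (R mu : ℝ) (n : ℕ) (X : ℝ × ℝ) : ℝ :=
  deriv (fun t => d2Phi R mu n (X.1, t)) X.2

/-- The Hessian matrix `D²Φ_n(X)`. -/
noncomputable def hessPhi (R mu : ℝ) (n : ℕ) (X : ℝ × ℝ) : Matrix (Fin 2) (Fin 2) ℝ :=
  !![d11Phi R mu n X, d12Phi R mu n X; d12Phi R mu n X, d22Phi R mu n X]

/-- The mobility matrix `M(X)`. -/
noncomputable def mobM (R mu : ℝ) (X : ℝ × ℝ) : Matrix (Fin 2) (Fin 2) ℝ :=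
  !![(1 + R) * X.1, R * X.1; mu * R * X.2, mu * R * X.2]

/-- The quantity `A_{j,k}`. -/
noncomputable def Acoef (R mu : ℝ) (n j k : ℕ) : ℝ :=
  ((j : ℝ) + 2) * ((n : ℝ) - (k : ℝ)) * coefa R mu n (j + 2) * coefa R mu n k
    - ((n : ℝ) - (j : ℝ) - 1) * ((k : ℝ) + 1) * coefa R mu n (j + 1) * coefa R mu n (k + 1)

/-- `ν_n`. -/
noncomputable def nuc (R mu : ℝ) (n : ℕ) : ℝ :=
  Real.exp (((n : ℝ) - 1) * ((1 + R * max 1 mu) * Real.log (1 + 1 / (R * max 1 mu)) - 1)) - 1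

set_option maxHeartbeats 1000000

lemma nat_ch1 (n r : ℕ) : (r+1) * n.choose (r+1) = n * (n-1).choose r := by
  cases n with
  | zero => simp
  | succ m =>
    have h := Nat.add_one_mul_choose_eq m r
    simp only [Nat.succ_eq_add_one, Nat.add_sub_cancel] at h ⊢
    rw [mul_comm]
    exact h.symm

lemma nat_ch2 (n r : ℕ) : ((r+2)*(r+1)) * n.choose (r+2) = (n*(n-1)) * (n-2).choose r := by
  match n with
  | 0 => simp
  | 1 => simp [Nat.choose_eq_zero_of_lt]
  | (m+2) =>
    have h1 : (r+2) * (m+2).choose (r+2) = (m+2) * (m+1).choose (r+1) := nat_ch1 (m+2) (r+1)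
    have h2 : (r+1) * (m+1).choose (r+1) = (m+1) * m.choose r := nat_ch1 (m+1) r
    have : (r+1)*((r+2) * (m+2).choose (r+2)) = (r+1)*((m+2) * (m+1).choose (r+1)) := by rw [h1]
    calc ((r+2)*(r+1)) * (m+2).choose (r+2) = (r+1)*((r+2) * (m+2).choose (r+2)) := by ring
    _ = (m+2)*((r+1) * (m+1).choose (r+1)) := by rw [h1]; ring
    _ = (m+2)*((m+1) * m.choose r) := by rw [h2]
    _ = ((m+2)*((m+2)-1)) * ((m+2)-2).choose r := by simp; ring

lemma vand (a b K : ℕ) : ∑ r ∈ range (K+1), a.choose r * b.choose (K-r) = (a+b).choose K := by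
  rw [Nat.add_choose_eq]
  rw [Finset.Nat.sum_antidiagonal_eq_sum_range_succ_mk]

lemma S1S2 (n M : ℕ) (hn : 2 ≤ n) :
    n * (∑ r ∈ range (M+1), (r * (r-1)) * (n.choose r * n.choose (M-r)))
    = (n-1) * (∑ r ∈ range (M+1), (r * (M-r)) * (n.choose r * n.choose (M-r))) := by
  match M with
  | 0 => simp
  | 1 =>
    norm_num [Finset.sum_range_succ]
  | (K+2) =>
    have hS1 : (∑ r ∈ range (K+3), (r * (r-1)) * (n.choose r * n.choose (K+2-r)))
        = (n*(n-1)) * (n-2+n).choose K := by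
      rw [Finset.sum_range_succ' (fun r => (r * (r-1)) * (n.choose r * n.choose (K+2-r))) (K+2)]
      rw [Finset.sum_range_succ' (fun r => ((r+1) * (r+1-1)) * (n.choose (r+1) * n.choose (K+2-(r+1)))) (K+1)]
      simp only [Nat.zero_mul, Nat.mul_zero, Nat.zero_add, Nat.add_zero, Nat.sub_self, mul_zero, zero_mul, add_zero]
      have : ∀ r ∈ range (K+1), ((r+1+1) * (r+1+1-1)) * (n.choose (r+1+1) * n.choose (K+2-(r+1+1)))
          = (n*(n-1)) * ((n-2).choose r * n.choose (K-r)) := by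
        intro r _
        have h2 : K+2-(r+1+1) = K - r := by omega
        rw [h2, show r+1+1 = r+2 by rfl, show r+2-1 = r+1 by omega]
        rw [show ((r+2)*(r+1)) * (n.choose (r+2) * n.choose (K-r)) = (((r+2)*(r+1)) * n.choose (r+2)) * n.choose (K-r) by ring, nat_ch2]
        ring
      rw [Finset.sum_congr rfl this, ← Finset.mul_sum, vand]
    have hS2 : (∑ r ∈ range (K+3), (r * (K+2-r)) * (n.choose r * n.choose (K+2-r)))
        = (n*n) * ((n-1)+(n-1)).choose K := by
      rw [Finset.sum_range_succ' (fun r => (r * (K+2-r)) * (n.choose r * n.choose (K+2-r))) (K+2)]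
      simp only [Nat.zero_mul, zero_mul, add_zero]
      rw [Finset.sum_range_succ]
      have htop : ((K+1+1) * (K+2-(K+1+1))) * (n.choose (K+1+1) * n.choose (K+2-(K+1+1))) = 0 := by
        norm_num
      rw [htop, add_zero]
      have : ∀ r ∈ range (K+1), ((r+1) * (K+2-(r+1))) * (n.choose (r+1) * n.choose (K+2-(r+1)))
          = (n*n) * ((n-1).choose r * (n-1).choose (K-r)) := by
        intro r hr
        have hrK : r ≤ K := by simpa [Nat.lt_succ_iff] using hr
        have h2 : K+2-(r+1) = (K-r)+1 := by omega
        rw [h2]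
        have e1 := nat_ch1 n r
        have e2 := nat_ch1 n (K-r)
        calc ((r+1) * ((K-r)+1)) * (n.choose (r+1) * n.choose ((K-r)+1))
            = ((r+1) * n.choose (r+1)) * (((K-r)+1) * n.choose ((K-r)+1)) := by ring
          _ = (n * (n-1).choose r) * (n * (n-1).choose (K-r)) := by rw [e1, e2]
          _ = (n*n) * ((n-1).choose r * (n-1).choose (K-r)) := by ring
      rw [Finset.sum_congr rfl this, ← Finset.mul_sum, vand]
    rw [hS1, hS2]
    have h1 : n-2+n = (n-1)+(n-1) := by omega
    rw [h1]; ring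


noncomputable def cseq (R mu : ℝ) (n j : ℕ) : ℝ :=
  ∏ k ∈ Finset.range j, ((k : ℝ) + alph R mu n k) / alph R mu n k

lemma coefa_eq (R mu : ℝ) (n j : ℕ) : coefa R mu n j = (n.choose j : ℝ) * cseq R mu n j := rfl

section
variable {R mu : ℝ} {n : ℕ} (hR : 0 < R) (hmu : 0 < mu) (hn : 2 ≤ n)
include hR hmu hn

lemma alph_pos {k : ℕ} (hk : k + 1 ≤ n) : 0 < alph R mu n k := by
  unfold alph
  have h1 : (k:ℝ) ≤ (n:ℝ) - 1 := by
    have : (k:ℝ) + 1 ≤ (n:ℝ) := by exact_mod_cast hk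
    linarith
  apply mul_pos hR
  rcases Nat.eq_zero_or_pos k with h | h
  · subst h
    have h2 : (2:ℝ) ≤ (n:ℝ) := by exact_mod_cast hn
    have : 0 < mu * ((n:ℝ) - (0:ℕ) - 1) := mul_pos hmu (by push_cast; linarith)
    push_cast at this ⊢
    linarith
  · have hk1 : (1:ℝ) ≤ (k:ℝ) := by exact_mod_cast h
    have : 0 ≤ mu * ((n:ℝ) - (k:ℝ) - 1) := mul_nonneg hmu.le (by linarith)
    linarith

lemma ratio_pos {k : ℕ} (hk : k + 1 ≤ n) :
    0 < ((k : ℝ) + alph R mu n k) / alph R mu n k := by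
  have h := alph_pos hR hmu hn hk
  have : (0:ℝ) ≤ (k:ℝ) := Nat.cast_nonneg k
  positivity

lemma cseq_pos {j : ℕ} (hj : j ≤ n) : 0 < cseq R mu n j := by
  unfold cseq
  apply Finset.prod_pos
  intro k hk
  exact ratio_pos hR hmu hn (by simp at hk; omega)

lemma rho_mono {i k : ℕ} (hik : i ≤ k) (hk : k + 1 ≤ n) :
    ((i : ℝ) + alph R mu n i) / alph R mu n i ≤ ((k : ℝ) + alph R mu n k) / alph R mu n k := by
  have hai := alph_pos hR hmu hn (show i + 1 ≤ n by omega)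
  have hak := alph_pos hR hmu hn hk
  rw [div_le_div_iff₀ hai hak]
  unfold alph
  have hik' : (i:ℝ) ≤ (k:ℝ) := by exact_mod_cast hik
  have hkn : (k:ℝ) ≤ (n:ℝ) - 1 := by
    have : (k:ℝ) + 1 ≤ (n:ℝ) := by exact_mod_cast hk
    linarith
  have h4 : (0:ℝ) ≤ R * mu * (((k:ℝ) - (i:ℝ)) * ((n:ℝ) - 1)) :=
    mul_nonneg (mul_nonneg hR.le hmu.le)
      (mul_nonneg (sub_nonneg.2 hik') (by linarith))
  nlinarith [h4]

lemma cseq_step {p q : ℕ} (hpq : p ≤ q) (hq : q + 1 ≤ n) :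
    cseq R mu n (p+1) * cseq R mu n q ≤ cseq R mu n p * cseq R mu n (q+1) := by
  have e1 : cseq R mu n (p+1) = cseq R mu n p * (((p : ℝ) + alph R mu n p) / alph R mu n p) := by
    unfold cseq; rw [Finset.prod_range_succ]
  have e2 : cseq R mu n (q+1) = cseq R mu n q * (((q : ℝ) + alph R mu n q) / alph R mu n q) := by
    unfold cseq; rw [Finset.prod_range_succ]
  rw [e1, e2]
  have h1 := cseq_pos hR hmu hn (show p ≤ n by omega)
  have h2 := cseq_pos hR hmu hn (show q ≤ n by omega)
  have h3 := rho_mono hR hmu hn hpq hq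
  calc cseq R mu n p * (((p : ℝ) + alph R mu n p) / alph R mu n p) * cseq R mu n q
      = (cseq R mu n p * cseq R mu n q) * (((p : ℝ) + alph R mu n p) / alph R mu n p) := by ring
    _ ≤ (cseq R mu n p * cseq R mu n q) * (((q : ℝ) + alph R mu n q) / alph R mu n q) := by
        apply mul_le_mul_of_nonneg_left h3 (by positivity)
    _ = cseq R mu n p * (cseq R mu n q * (((q : ℝ) + alph R mu n q) / alph R mu n q)) := by ring

lemma cseq_chain (k : ℕ) : ∀ p q : ℕ, p + k + k ≤ q → q ≤ n →
    cseq R mu n (p + k) * cseq R mu n (q - k) ≤ cseq R mu n p * cseq R mu n q := by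
  induction k with
  | zero => intro p q _ _; simp
  | succ k ih =>
    intro p q h hqn
    have step : cseq R mu n (p + k + 1) * cseq R mu n (q - k - 1) ≤
        cseq R mu n (p + k) * cseq R mu n (q - k) := by
      have h1 : p + k ≤ q - k - 1 := by omega
      have h2 : (q - k - 1) + 1 ≤ n := by omega
      have := cseq_step hR hmu hn h1 h2
      have e : q - k - 1 + 1 = q - k := by omega
      rw [e] at this
      calc cseq R mu n (p + k + 1) * cseq R mu n (q - k - 1)
          = cseq R mu n (p + k + 1) * cseq R mu n (q - k - 1) := rfl
        _ ≤ cseq R mu n (p + k) * cseq R mu n (q - k) := this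
    have e1 : p + (k+1) = p + k + 1 := by omega
    have e2 : q - (k+1) = q - k - 1 := by omega
    rw [e1, e2]
    exact le_trans step (ih p q (by omega) hqn)

lemma pairprod_le {M r r' : ℕ} (hr : r ≤ M) (hr' : r' ≤ M)
    (hrn : r ≤ n) (hsn : M - r ≤ n) (hrn' : r' ≤ n) (hsn' : M - r' ≤ n)
    (hP : r * (M - r) < r' * (M - r')) :
    cseq R mu n r' * cseq R mu n (M - r') ≤ cseq R mu n r * cseq R mu n (M - r) := by
  set t := min r (M - r) with ht
  set t' := min r' (M - r') with ht'
  have hP1 : t * (M - t) = r * (M - r) := by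
    rcases min_cases r (M - r) with ⟨h1, h2⟩ | ⟨h1, h2⟩
    · simp only [ht, h1]
    · simp only [ht, h1, show M - (M - r) = r by omega]; exact Nat.mul_comm _ _
  have hP2 : t' * (M - t') = r' * (M - r') := by
    rcases min_cases r' (M - r') with ⟨h1, h2⟩ | ⟨h1, h2⟩
    · simp only [ht', h1]
    · simp only [ht', h1, show M - (M - r') = r' by omega]; exact Nat.mul_comm _ _
  have h2t : t + t ≤ M := by omega
  have h2t' : t' + t' ≤ M := by omega
  have htt : t < t' := by
    by_contra hc
    push_neg at hc
    -- t' ≤ t ⇒ t'(M-t') ≤ t(M-t)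
    have : t' * (M - t') ≤ t * (M - t) := by
      zify [show t' ≤ M by omega, show t ≤ M by omega]
      have hc' : (t':ℤ) ≤ (t:ℤ) := by exact_mod_cast hc
      have hz1 : (0:ℤ) ≤ (t:ℤ) - (t':ℤ) := by linarith
      have hMt : (t:ℤ) + (t:ℤ) ≤ (M:ℤ) := by exact_mod_cast h2t
      have hz2 : (0:ℤ) ≤ (M:ℤ) - (t:ℤ) - (t':ℤ) := by linarith
      nlinarith [mul_nonneg hz1 hz2]
    omega
  -- chain from (t, M-t) inward to (t', M-t')
  have hch := cseq_chain hR hmu hn (t' - t) t (M - t) (by omega) (by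
    rcases min_cases r (M - r) with ⟨h1, h2⟩ | ⟨h1, h2⟩ <;> omega)
  have e1 : t + (t' - t) = t' := by omega
  have e2 : M - t - (t' - t) = M - t' := by omega
  rw [e1, e2] at hch
  have eq1 : cseq R mu n r * cseq R mu n (M - r) = cseq R mu n t * cseq R mu n (M - t) := by
    rcases min_cases r (M - r) with ⟨h1, h2⟩ | ⟨h1, h2⟩
    · rw [ht, h1]
    · rw [ht, h1, show M - (M - r) = r by omega, mul_comm]
  have eq2 : cseq R mu n r' * cseq R mu n (M - r') = cseq R mu n t' * cseq R mu n (M - t') := by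
    rcases min_cases r' (M - r') with ⟨h1, h2⟩ | ⟨h1, h2⟩
    · rw [ht', h1]
    · rw [ht', h1, show M - (M - r') = r' by omega, mul_comm]
  rw [eq1, eq2]
  exact hch

end

noncomputable def wfun (n r s : ℕ) : ℝ :=
  (r:ℝ)*((r:ℝ)-1)*((n:ℝ)-(s:ℝ))*((n:ℝ)-(s:ℝ)-1) - (r:ℝ)*((n:ℝ)-(r:ℝ))*(s:ℝ)*((n:ℝ)-(s:ℝ))

noncomputable def Efun (n r s : ℕ) : ℝ :=
  ((n:ℝ)-1)*((n:ℝ)*((r:ℝ)*((r:ℝ)-1)+(s:ℝ)*((s:ℝ)-1)) - 2*((n:ℝ)-1)*(r:ℝ)*(s:ℝ))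

lemma wE (n r s : ℕ) : wfun n r s + wfun n s r = Efun n r s := by unfold wfun Efun; ring

lemma Efun_eq (n M x : ℕ) (hx : x ≤ M) :
    Efun n x (M-x) = ((n:ℝ)-1)*((n:ℝ)*(M:ℝ)*((M:ℝ)-1) - (4*(n:ℝ)-2)*((x:ℝ)*((M:ℝ)-(x:ℝ)))) := by
  unfold Efun
  rw [Nat.cast_sub hx]
  ring

lemma VdM {n : ℕ} (hn : 2 ≤ n) (M : ℕ) :
    ∑ r ∈ range (M+1), Efun n r (M-r) * ((n.choose r : ℝ) * (n.choose (M-r) : ℝ)) = 0 := by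
  set Anat := ∑ r ∈ range (M+1), (r*(r-1)) * (n.choose r * n.choose (M-r)) with hA
  set Cnat := ∑ r ∈ range (M+1), (r*(M-r)) * (n.choose r * n.choose (M-r)) with hC
  have hAC : (n:ℝ) * (Anat:ℝ) = ((n:ℝ)-1) * (Cnat:ℝ) := by
    have h := S1S2 n M hn
    have h' : ((n * Anat : ℕ) : ℝ) = (((n-1) * Cnat : ℕ) : ℝ) := by exact_mod_cast congrArg Nat.cast h
    push_cast [Nat.cast_sub (show 1 ≤ n by omega)] at h'
    convert h' using 2 <;> push_cast <;> ring
  have hT1 : ∑ r ∈ range (M+1), (r:ℝ)*((r:ℝ)-1)*((n.choose r : ℝ) * (n.choose (M-r) : ℝ)) = (Anat:ℝ) := by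
    rw [hA]
    push_cast
    apply Finset.sum_congr rfl
    intro r _
    rcases Nat.eq_zero_or_pos r with h | h
    · subst h; simp
    · rw [Nat.cast_sub (show 1 ≤ r by omega)]; push_cast; ring
  have hT3 : ∑ r ∈ range (M+1), (r:ℝ)*((M-r:ℕ):ℝ)*((n.choose r : ℝ) * (n.choose (M-r) : ℝ)) = (Cnat:ℝ) := by
    rw [hC]; push_cast; ring
  have hT2 : ∑ r ∈ range (M+1), ((M-r:ℕ):ℝ)*(((M-r:ℕ):ℝ)-1)*((n.choose r : ℝ) * (n.choose (M-r) : ℝ))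
      = (Anat:ℝ) := by
    rw [← hT1]
    rw [← Finset.sum_range_reflect (fun j => (j:ℝ)*((j:ℝ)-1)*((n.choose j : ℝ) * (n.choose (M-j) : ℝ))) (M+1)]
    apply Finset.sum_congr rfl
    intro r hr
    have hrM : r ≤ M := by simp at hr; omega
    have e1 : M + 1 - 1 - r = M - r := by omega
    have e2 : M - (M - r) = r := by omega
    rw [e1, e2]
    ring
  have expand : ∀ r ∈ range (M+1),
      Efun n r (M-r) * ((n.choose r : ℝ) * (n.choose (M-r) : ℝ))
      = ((n:ℝ)-1)*(n:ℝ) * ((r:ℝ)*((r:ℝ)-1)*((n.choose r : ℝ) * (n.choose (M-r) : ℝ)))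
        + ((n:ℝ)-1)*(n:ℝ) * (((M-r:ℕ):ℝ)*(((M-r:ℕ):ℝ)-1)*((n.choose r : ℝ) * (n.choose (M-r) : ℝ)))
        - 2*((n:ℝ)-1)^2 * ((r:ℝ)*((M-r:ℕ):ℝ)*((n.choose r : ℝ) * (n.choose (M-r) : ℝ))) := by
    intro r _
    unfold Efun
    ring
  rw [Finset.sum_congr rfl expand]
  rw [Finset.sum_sub_distrib, Finset.sum_add_distrib, ← Finset.mul_sum, ← Finset.mul_sum, ← Finset.mul_sum]
  rw [hT1, hT2, hT3]
  nlinarith [hAC]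

lemma keyM {R mu : ℝ} {n : ℕ} (hR : 0 < R) (hmu : 0 < mu) (hn : 2 ≤ n) (M : ℕ) :
    0 ≤ ∑ r ∈ range (M+1), wfun n r (M-r) * (coefa R mu n r * coefa R mu n (M-r)) := by
  set S := ∑ r ∈ range (M+1), wfun n r (M-r) * (coefa R mu n r * coefa R mu n (M-r)) with hS
  have hrefl : S = ∑ r ∈ range (M+1), wfun n (M-r) r * (coefa R mu n (M-r) * coefa R mu n r) := by
    rw [hS, ← Finset.sum_range_reflect
      (fun j => wfun n j (M-j) * (coefa R mu n j * coefa R mu n (M-j))) (M+1)]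
    apply Finset.sum_congr rfl
    intro r hr
    have hrM : r ≤ M := by simp at hr; omega
    have e1 : M + 1 - 1 - r = M - r := by omega
    have e2 : M - (M - r) = r := by omega
    rw [e1, e2]
  have h2S : 2 * S = ∑ r ∈ range (M+1), Efun n r (M-r) * (coefa R mu n r * coefa R mu n (M-r)) := by
    rw [two_mul]
    nth_rewrite 2 [hrefl]
    rw [← Finset.sum_add_distrib]
    apply Finset.sum_congr rfl
    intro r _
    have hw := wE n r (M-r)
    calc wfun n r (M-r) * (coefa R mu n r * coefa R mu n (M-r))
          + wfun n (M-r) r * (coefa R mu n (M-r) * coefa R mu n r)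
        = (wfun n r (M-r) + wfun n (M-r) r) * (coefa R mu n r * coefa R mu n (M-r)) := by ring
      _ = Efun n r (M-r) * (coefa R mu n r * coefa R mu n (M-r)) := by rw [hw]
  set D := (range (M+1)).sup' nonempty_range_add_one
      (fun r => if Efun n r (M-r) < 0 ∧ r ≤ n ∧ M - r ≤ n
        then cseq R mu n r * cseq R mu n (M-r) else 0) with hD
  have hsplit : ∑ r ∈ range (M+1), Efun n r (M-r) * (coefa R mu n r * coefa R mu n (M-r))
      = ∑ r ∈ range (M+1), Efun n r (M-r) * ((n.choose r : ℝ) * (n.choose (M-r) : ℝ))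
          * (cseq R mu n r * cseq R mu n (M-r) - D)
        + (∑ r ∈ range (M+1), Efun n r (M-r) * ((n.choose r : ℝ) * (n.choose (M-r) : ℝ))) * D := by
    rw [Finset.sum_mul, ← Finset.sum_add_distrib]
    apply Finset.sum_congr rfl
    intro r _
    rw [coefa_eq, coefa_eq]
    ring
  have hterm : ∀ r ∈ range (M+1),
      0 ≤ Efun n r (M-r) * ((n.choose r : ℝ) * (n.choose (M-r) : ℝ))
          * (cseq R mu n r * cseq R mu n (M-r) - D) := by
    intro r hr
    have hrM : r ≤ M := by simp at hr; omega
    by_cases hval : r ≤ n ∧ M - r ≤ n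
    · obtain ⟨hrn, hsn⟩ := hval
      have hccpos : 0 < cseq R mu n r * cseq R mu n (M-r) :=
        mul_pos (cseq_pos hR hmu hn hrn) (cseq_pos hR hmu hn hsn)
      by_cases hE : Efun n r (M-r) < 0
      · have hle : cseq R mu n r * cseq R mu n (M-r) ≤ D := by
          have := Finset.le_sup' (fun r => if Efun n r (M-r) < 0 ∧ r ≤ n ∧ M - r ≤ n
            then cseq R mu n r * cseq R mu n (M-r) else 0) (Finset.mem_range.2 (by omega : r < M+1))
          rw [if_pos ⟨hE, hrn, hsn⟩] at this
          exact this
        have huu : (0:ℝ) ≤ (n.choose r : ℝ) * (n.choose (M-r) : ℝ) := by positivity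
        nlinarith [mul_nonneg (neg_nonneg.2 hE.le) (mul_nonneg huu (sub_nonneg.2 hle))]
      · push_neg at hE
        have hDle : D ≤ cseq R mu n r * cseq R mu n (M-r) := by
          apply Finset.sup'_le
          intro r' hr'
          have hrM' : r' ≤ M := by simp at hr'; omega
          split_ifs with h
          · obtain ⟨hE', hrn', hsn'⟩ := h
            apply pairprod_le hR hmu hn hrM hrM' hrn hsn hrn' hsn'
            -- r * (M - r) < r' * (M - r')
            have hq1 := Efun_eq n M r hrM
            have hq2 := Efun_eq n M r' hrM'
            rw [hq1] at hE
            rw [hq2] at hE'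
            have hn1 : (1:ℝ) ≤ (n:ℝ) - 1 := by
              have : (2:ℝ) ≤ (n:ℝ) := by exact_mod_cast hn
              linarith
            have hK : (0:ℝ) < 4*(n:ℝ)-2 := by linarith
            have h1 : 0 ≤ (n:ℝ)*(M:ℝ)*((M:ℝ)-1) - (4*(n:ℝ)-2)*((r:ℝ)*((M:ℝ)-(r:ℝ))) := by
              by_contra hcon
              push_neg at hcon
              nlinarith [mul_pos (show (0:ℝ) < (n:ℝ)-1 by linarith)
                (show (0:ℝ) < -((n:ℝ)*(M:ℝ)*((M:ℝ)-1) - (4*(n:ℝ)-2)*((r:ℝ)*((M:ℝ)-(r:ℝ)))) by linarith)]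
            have h2 : (n:ℝ)*(M:ℝ)*((M:ℝ)-1) - (4*(n:ℝ)-2)*((r':ℝ)*((M:ℝ)-(r':ℝ))) < 0 := by
              by_contra hcon
              push_neg at hcon
              nlinarith [mul_nonneg (show (0:ℝ) ≤ (n:ℝ)-1 by linarith) hcon]
            have hPreal : (r:ℝ)*((M:ℝ)-(r:ℝ)) < (r':ℝ)*((M:ℝ)-(r':ℝ)) := by
              by_contra hcon
              push_neg at hcon
              nlinarith [mul_le_mul_of_nonneg_left hcon hK.le]
            have : ((r * (M-r) : ℕ) : ℝ) < ((r' * (M-r') : ℕ) : ℝ) := by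
              push_cast [Nat.cast_sub hrM, Nat.cast_sub hrM']
              exact hPreal
            exact_mod_cast this
          · exact hccpos.le
        have huu : (0:ℝ) ≤ (n.choose r : ℝ) * (n.choose (M-r) : ℝ) := by positivity
        exact mul_nonneg (mul_nonneg hE huu) (sub_nonneg.2 hDle)
    · have hzero : (n.choose r : ℝ) * (n.choose (M-r) : ℝ) = 0 := by
        rcases not_and_or.1 hval with h | h
        · rw [Nat.choose_eq_zero_of_lt (show n < r by omega)]; ring
        · rw [Nat.choose_eq_zero_of_lt (show n < M - r by omega)]; ring
      rw [hzero]
      simp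
  have h2Snn : 0 ≤ 2 * S := by
    rw [h2S, hsplit, VdM hn M, zero_mul, add_zero]
    exact Finset.sum_nonneg hterm
  linarith

lemma coefa_zero {R mu : ℝ} {n j : ℕ} (h : n < j) : coefa R mu n j = 0 := by
  rw [coefa_eq, Nat.choose_eq_zero_of_lt h]
  simp

lemma coefa_nonneg {R mu : ℝ} {n : ℕ} (hR : 0 < R) (hmu : 0 < mu) (hn : 2 ≤ n) (j : ℕ) :
    0 ≤ coefa R mu n j := by
  rcases le_or_gt j n with h | h
  · rw [coefa_eq]
    exact mul_nonneg (Nat.cast_nonneg _) (cseq_pos hR hmu hn h).le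
  · rw [coefa_zero h]

noncomputable def fxx (R mu : ℝ) (n : ℕ) (p q : ℝ) : ℝ :=
  ∑ j ∈ range (n-1), (((j+2)*(j+1) : ℕ) : ℝ) * coefa R mu n (j+2) * (p^j * q^(n-2-j))

noncomputable def fxy (R mu : ℝ) (n : ℕ) (p q : ℝ) : ℝ :=
  ∑ j ∈ range (n-1), (((j+1)*(n-(j+1)) : ℕ) : ℝ) * coefa R mu n (j+1) * (p^j * q^(n-2-j))

noncomputable def fyy (R mu : ℝ) (n : ℕ) (p q : ℝ) : ℝ :=
  ∑ j ∈ range (n-1), (((n-j)*(n-(j+1)) : ℕ) : ℝ) * coefa R mu n j * (p^j * q^(n-2-j))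

lemma sum_sq_to_diag (N : ℕ) (T : ℕ → ℕ → ℝ) (hT : ∀ j k, N ≤ j ∨ N ≤ k → T j k = 0) :
    ∑ j ∈ range N, ∑ k ∈ range N, T j k = ∑ M ∈ range (2*N), ∑ r ∈ range (M+1), T r (M-r) := by
  have h1 : ∀ M ∈ range (2*N), ∑ r ∈ range (M+1), T r (M-r)
      = ∑ pq ∈ Finset.HasAntidiagonal.antidiagonal M, T pq.1 pq.2 := by
    intro M _
    exact (Finset.Nat.sum_antidiagonal_eq_sum_range_succ_mk (fun pq => T pq.1 pq.2) M).symm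
  rw [Finset.sum_congr rfl h1]
  have hdisj : (↑(range (2*N)) : Set ℕ).PairwiseDisjoint (fun M => Finset.HasAntidiagonal.antidiagonal M) := by
    intro a _ b _ hab
    apply Finset.disjoint_left.2
    intro x hxa hxb
    rw [Finset.HasAntidiagonal.mem_antidiagonal] at hxa hxb
    exact hab (hxa ▸ hxb)
  rw [← Finset.sum_biUnion hdisj]
  rw [← Finset.sum_product']
  apply Finset.sum_subset
  · intro x hx
    rw [Finset.mem_product] at hx
    obtain ⟨hx1, hx2⟩ := hx
    rw [Finset.mem_range] at hx1 hx2
    rw [Finset.mem_biUnion]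
    refine ⟨x.1 + x.2, ?_, ?_⟩
    · rw [Finset.mem_range]
      omega
    · rw [Finset.HasAntidiagonal.mem_antidiagonal]
  · intro x hx hnx
    rw [Finset.mem_product] at hnx
    rcases not_and_or.1 hnx with h | h
    · exact hT x.1 x.2 (Or.inl (by rw [Finset.mem_range] at h; omega))
    · exact hT x.1 x.2 (Or.inr (by rw [Finset.mem_range] at h; omega))

section detpart
variable {R mu : ℝ} {n : ℕ} (hR : 0 < R) (hmu : 0 < mu) (hn : 2 ≤ n)
include hR hmu hn

lemma H1 (s : ℕ) : ((n:ℝ)-(s:ℝ)) * ((n:ℝ)-(s:ℝ)-1) * coefa R mu n s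
    = ((n-s : ℕ) : ℝ) * ((n-(s+1) : ℕ) : ℝ) * coefa R mu n s := by
  by_cases h1 : s + 1 ≤ n
  · rw [Nat.cast_sub (by omega : s ≤ n), Nat.cast_sub h1]
    push_cast
    ring
  · by_cases h2 : s = n
    · rw [h2, Nat.sub_self, show n-(n+1) = 0 by omega]
      push_cast
      ring
    · rw [coefa_zero (by omega : n < s)]
      ring

lemma H2 (s : ℕ) : ((n:ℝ)-(s:ℝ)) * coefa R mu n s = ((n-s : ℕ) : ℝ) * coefa R mu n s := by
  by_cases h1 : s ≤ n
  · rw [Nat.cast_sub h1]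
  · rw [coefa_zero (by omega : n < s)]
    ring

lemma claim_coef (M : ℕ) :
    ∑ r ∈ range (M+3), wfun n r (M+2-r) * (coefa R mu n r * coefa R mu n (M+2-r))
    = ∑ r ∈ range (M+1),
        ((((r+2)*(r+1) : ℕ) : ℝ) * coefa R mu n (r+2) * ((((n-(M-r))*(n-(M-r+1)) : ℕ) : ℝ) * coefa R mu n (M-r))
         - (((r+1)*(n-(r+1)) : ℕ) : ℝ) * coefa R mu n (r+1) * ((((M-r+1)*(n-(M-r+1)) : ℕ) : ℝ) * coefa R mu n (M-r+1))) := by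
  have hsplit : ∀ r ∈ range (M+3),
      wfun n r (M+2-r) * (coefa R mu n r * coefa R mu n (M+2-r))
      = ((r:ℝ)*((r:ℝ)-1)*((n:ℝ)-((M+2-r : ℕ):ℝ))*((n:ℝ)-((M+2-r : ℕ):ℝ)-1)) * (coefa R mu n r * coefa R mu n (M+2-r))
        - ((r:ℝ)*((n:ℝ)-(r:ℝ))*((M+2-r : ℕ):ℝ)*((n:ℝ)-((M+2-r : ℕ):ℝ))) * (coefa R mu n r * coefa R mu n (M+2-r)) := by
    intro r _
    unfold wfun
    ring
  rw [Finset.sum_congr rfl hsplit, Finset.sum_sub_distrib]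
  have hw1 : ∑ r ∈ range (M+3),
      ((r:ℝ)*((r:ℝ)-1)*((n:ℝ)-((M+2-r : ℕ):ℝ))*((n:ℝ)-((M+2-r : ℕ):ℝ)-1)) * (coefa R mu n r * coefa R mu n (M+2-r))
      = ∑ r ∈ range (M+1),
        (((r+2)*(r+1) : ℕ) : ℝ) * coefa R mu n (r+2) * ((((n-(M-r))*(n-(M-r+1)) : ℕ) : ℝ) * coefa R mu n (M-r)) := by
    rw [Finset.sum_range_succ', Finset.sum_range_succ']
    have e0 : ((0:ℕ):ℝ)*(((0:ℕ):ℝ)-1)*((n:ℝ)-((M+2-0 : ℕ):ℝ))*((n:ℝ)-((M+2-0 : ℕ):ℝ)-1) * (coefa R mu n 0 * coefa R mu n (M+2-0)) = 0 := by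
      norm_num
    have e1 : ((0+1:ℕ):ℝ)*(((0+1:ℕ):ℝ)-1)*((n:ℝ)-((M+2-(0+1) : ℕ):ℝ))*((n:ℝ)-((M+2-(0+1) : ℕ):ℝ)-1) * (coefa R mu n (0+1) * coefa R mu n (M+2-(0+1))) = 0 := by
      norm_num
    rw [e0, e1, add_zero, add_zero]
    apply Finset.sum_congr rfl
    intro k hk
    have hkM : k ≤ M := by simp at hk; omega
    rw [show M+2-(k+1+1) = M-k by omega, show k+1+1 = k+2 by rfl]
    have h := H1 hR hmu hn (M-k)
    calc ((k+2:ℕ):ℝ)*(((k+2:ℕ):ℝ)-1)*((n:ℝ)-((M-k : ℕ):ℝ))*((n:ℝ)-((M-k : ℕ):ℝ)-1) * (coefa R mu n (k+2) * coefa R mu n (M-k))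
        = (((k+2:ℕ):ℝ)*(((k+2:ℕ):ℝ)-1) * coefa R mu n (k+2)) * (((n:ℝ)-((M-k : ℕ):ℝ))*(((n:ℝ)-((M-k : ℕ):ℝ))-1) * coefa R mu n (M-k)) := by
          ring
      _ = (((k+2:ℕ):ℝ)*(((k+2:ℕ):ℝ)-1) * coefa R mu n (k+2)) * (((n-(M-k) : ℕ):ℝ) * ((n-(M-k+1) : ℕ):ℝ) * coefa R mu n (M-k)) := by
          rw [h]
      _ = (((k+2)*(k+1) : ℕ) : ℝ) * coefa R mu n (k+2) * ((((n-(M-k))*(n-(M-k+1)) : ℕ) : ℝ) * coefa R mu n (M-k)) := by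
          push_cast
          ring
  have hw2 : ∑ r ∈ range (M+3),
      ((r:ℝ)*((n:ℝ)-(r:ℝ))*((M+2-r : ℕ):ℝ)*((n:ℝ)-((M+2-r : ℕ):ℝ))) * (coefa R mu n r * coefa R mu n (M+2-r))
      = ∑ r ∈ range (M+1),
        (((r+1)*(n-(r+1)) : ℕ) : ℝ) * coefa R mu n (r+1) * ((((M-r+1)*(n-(M-r+1)) : ℕ) : ℝ) * coefa R mu n (M-r+1)) := by
    rw [Finset.sum_range_succ']
    have e0 : ((0:ℕ):ℝ)*((n:ℝ)-((0:ℕ):ℝ))*((M+2-0 : ℕ):ℝ)*((n:ℝ)-((M+2-0 : ℕ):ℝ)) * (coefa R mu n 0 * coefa R mu n (M+2-0)) = 0 := by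
      norm_num
    rw [e0, add_zero, Finset.sum_range_succ]
    have etop : ((M+1+1:ℕ):ℝ)*((n:ℝ)-((M+1+1:ℕ):ℝ))*((M+2-(M+1+1) : ℕ):ℝ)*((n:ℝ)-((M+2-(M+1+1) : ℕ):ℝ)) * (coefa R mu n (M+1+1) * coefa R mu n (M+2-(M+1+1))) = 0 := by
      rw [show M+2-(M+1+1) = 0 by omega]
      norm_num
    rw [etop, add_zero]
    apply Finset.sum_congr rfl
    intro k hk
    have hkM : k ≤ M := by simp at hk; omega
    rw [show M+2-(k+1) = M-k+1 by omega]
    have h1 := H2 hR hmu hn (k+1)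
    have h2 := H2 hR hmu hn (M-k+1)
    calc ((k+1:ℕ):ℝ)*((n:ℝ)-((k+1:ℕ):ℝ))*((M-k+1 : ℕ):ℝ)*((n:ℝ)-((M-k+1 : ℕ):ℝ)) * (coefa R mu n (k+1) * coefa R mu n (M-k+1))
        = (((k+1:ℕ):ℝ)) * (((n:ℝ)-((k+1:ℕ):ℝ)) * coefa R mu n (k+1)) * ((((M-k+1 : ℕ):ℝ)) * (((n:ℝ)-((M-k+1 : ℕ):ℝ)) * coefa R mu n (M-k+1))) := by
          ring
      _ = (((k+1:ℕ):ℝ)) * (((n-(k+1) : ℕ):ℝ) * coefa R mu n (k+1)) * ((((M-k+1 : ℕ):ℝ)) * (((n-(M-k+1) : ℕ):ℝ) * coefa R mu n (M-k+1))) := by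
          rw [h1, h2]
      _ = (((k+1)*(n-(k+1)) : ℕ) : ℝ) * coefa R mu n (k+1) * ((((M-k+1)*(n-(M-k+1)) : ℕ) : ℝ) * coefa R mu n (M-k+1)) := by
          push_cast
          ring
  rw [hw1, hw2, ← Finset.sum_sub_distrib]

lemma det_key (p q : ℝ) (hp : 0 ≤ p) (hq : 0 ≤ q) :
    (fxy R mu n p q)^2 ≤ fxx R mu n p q * fyy R mu n p q := by
  set T : ℕ → ℕ → ℝ := fun j k =>
    ((((j+2)*(j+1) : ℕ):ℝ) * coefa R mu n (j+2) * ((((n-k)*(n-(k+1)) : ℕ):ℝ) * coefa R mu n k)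
     - (((j+1)*(n-(j+1)) : ℕ):ℝ) * coefa R mu n (j+1) * ((((k+1)*(n-(k+1)) : ℕ):ℝ) * coefa R mu n (k+1)))
    * (p^(j+k) * q^(2*(n-2)-(j+k))) with hT
  have step1 : fxx R mu n p q * fyy R mu n p q - (fxy R mu n p q)^2
      = ∑ j ∈ range (n-1), ∑ k ∈ range (n-1), T j k := by
    unfold fxx fyy fxy
    rw [pow_two, Finset.sum_mul_sum, Finset.sum_mul_sum, ← Finset.sum_sub_distrib]
    apply Finset.sum_congr rfl
    intro j hj
    rw [← Finset.sum_sub_distrib]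
    apply Finset.sum_congr rfl
    intro k hk
    have hj' : j ≤ n-2 := by simp at hj; omega
    have hk' : k ≤ n-2 := by simp at hk; omega
    have hpp : p^j * p^k = p^(j+k) := (pow_add p j k).symm
    have hqq : q^(n-2-j) * q^(n-2-k) = q^(2*(n-2)-(j+k)) := by
      rw [← pow_add]
      congr 1
      omega
    rw [hT]
    calc (((j+2)*(j+1) : ℕ):ℝ) * coefa R mu n (j+2) * (p^j * q^(n-2-j))
          * ((((n-k)*(n-(k+1)) : ℕ):ℝ) * coefa R mu n k * (p^k * q^(n-2-k)))
        - (((j+1)*(n-(j+1)) : ℕ):ℝ) * coefa R mu n (j+1) * (p^j * q^(n-2-j))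
          * ((((k+1)*(n-(k+1)) : ℕ):ℝ) * coefa R mu n (k+1) * (p^k * q^(n-2-k)))
        = ((((j+2)*(j+1) : ℕ):ℝ) * coefa R mu n (j+2) * ((((n-k)*(n-(k+1)) : ℕ):ℝ) * coefa R mu n k)
           - (((j+1)*(n-(j+1)) : ℕ):ℝ) * coefa R mu n (j+1) * ((((k+1)*(n-(k+1)) : ℕ):ℝ) * coefa R mu n (k+1)))
          * ((p^j * p^k) * (q^(n-2-j) * q^(n-2-k))) := by ring
      _ = _ := by rw [hpp, hqq]
  have step2 : ∀ j k, (n-1) ≤ j ∨ (n-1) ≤ k → T j k = 0 := by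
    intro j k h
    simp only [hT]
    rcases h with h | h
    · rw [coefa_zero (show n < j+2 by omega), show n-(j+1) = 0 by omega]
      push_cast
      ring
    · rw [show n-(k+1) = 0 by omega]
      push_cast
      ring
  have step3 : fxx R mu n p q * fyy R mu n p q - (fxy R mu n p q)^2
      = ∑ M ∈ range (2*(n-1)), ∑ r ∈ range (M+1), T r (M-r) := by
    rw [step1, sum_sq_to_diag (n-1) T step2]
  have step4 : ∀ M ∈ range (2*(n-1)), 0 ≤ ∑ r ∈ range (M+1), T r (M-r) := by
    intro M _
    have hfac : ∑ r ∈ range (M+1), T r (M-r)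
        = (∑ r ∈ range (M+1),
            ((((r+2)*(r+1) : ℕ):ℝ) * coefa R mu n (r+2) * ((((n-(M-r))*(n-(M-r+1)) : ℕ):ℝ) * coefa R mu n (M-r))
             - (((r+1)*(n-(r+1)) : ℕ):ℝ) * coefa R mu n (r+1) * ((((M-r+1)*(n-(M-r+1)) : ℕ):ℝ) * coefa R mu n (M-r+1))))
          * (p^M * q^(2*(n-2)-M)) := by
      rw [Finset.sum_mul]
      apply Finset.sum_congr rfl
      intro r hr
      have hrM : r ≤ M := by simp at hr; omega
      simp only [hT]
      rw [show r+(M-r) = M by omega]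
    rw [hfac]
    apply mul_nonneg
    · rw [← claim_coef hR hmu hn M]
      exact keyM hR hmu hn (M+2)
    · positivity
  rw [← sub_nonneg]
  rw [step3]
  exact Finset.sum_nonneg step4

end detpart

lemma quad_nonneg (A C E B D : ℝ) (hA : 0 ≤ A) (hE : 0 ≤ E) (hdet : C^2 ≤ A*E) :
    0 ≤ B^2 * A + 2*(B*D) * C + D^2 * E := by
  rcases eq_or_lt_of_le hA with h | h
  · have hC : C = 0 := by nlinarith [sq_nonneg C]
    rw [hC, ← h]
    have := mul_nonneg (sq_nonneg D) hE
    nlinarith [this]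
  · nlinarith [sq_nonneg (A*B + C*D), mul_nonneg (sub_nonneg.2 hdet) (sq_nonneg D), h]

section analysis
variable {R mu : ℝ} {m : ℕ} (hR : 0 < R) (hmu : 0 < mu)
include hR hmu

lemma fxx_nonneg (p q : ℝ) (hp : 0 ≤ p) (hq : 0 ≤ q) : 0 ≤ fxx R mu (m+2) p q := by
  apply Finset.sum_nonneg
  intro j _
  have h1 := coefa_nonneg hR hmu (show 2 ≤ m+2 by omega) (j+2)
  have h2 : (0:ℝ) ≤ p^j * q^(m+2-2-j) := mul_nonneg (pow_nonneg hp j) (pow_nonneg hq _)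
  positivity

lemma fyy_nonneg (p q : ℝ) (hp : 0 ≤ p) (hq : 0 ≤ q) : 0 ≤ fyy R mu (m+2) p q := by
  apply Finset.sum_nonneg
  intro j _
  have h1 := coefa_nonneg hR hmu (show 2 ≤ m+2 by omega) j
  have h2 : (0:ℝ) ≤ p^j * q^(m+2-2-j) := mul_nonneg (pow_nonneg hp j) (pow_nonneg hq _)
  positivity

lemma EAsum (p q B : ℝ) :
    ∑ j ∈ range (m+3), (coefa R mu (m+2) j * ((j:ℝ) * ((j-1 : ℕ):ℝ) * p^(j-1-1) * q^(m+2-j))) * B^2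
    = B^2 * fxx R mu (m+2) p q := by
  rw [Finset.sum_range_succ', Finset.sum_range_succ']
  norm_num
  rw [fxx, Finset.mul_sum]
  apply Finset.sum_congr rfl
  intro j hj
  have hjm : j ≤ m := by simp at hj; omega
  rw [show m+2-(j+1+1) = m-j by omega, show m+2-2-j = m-j by omega]
  push_cast
  ring

lemma EBsum (p q B D : ℝ) :
    ∑ j ∈ range (m+3), (coefa R mu (m+2) j * ((j:ℝ) * ((m+2-j : ℕ):ℝ) * p^(j-1) * q^(m+2-j-1))) * (2*(B*D))
    = 2*(B*D) * fxy R mu (m+2) p q := by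
  rw [Finset.sum_range_succ']
  norm_num
  rw [Finset.sum_range_succ]
  norm_num
  rw [fxy, Finset.mul_sum]
  apply Finset.sum_congr rfl
  intro j hj
  have hjm : j ≤ m := by simp at hj; omega
  rw [show m+2-(j+1)-1 = m-j by omega, show m+2-(j+1) = m+1-j by omega, show m+2-2-j = m-j by omega]
  push_cast [Nat.cast_sub (show j ≤ m+1 by omega)]
  ring

lemma ECsum (p q D : ℝ) :
    ∑ j ∈ range (m+3), (coefa R mu (m+2) j * (((m+2-j : ℕ):ℝ) * ((m+2-j-1 : ℕ):ℝ) * p^j * q^(m+2-j-1-1))) * D^2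
    = D^2 * fyy R mu (m+2) p q := by
  rw [Finset.sum_range_succ]
  norm_num
  rw [Finset.sum_range_succ]
  norm_num
  rw [fyy, Finset.mul_sum]
  apply Finset.sum_congr rfl
  intro j hj
  have hjm : j ≤ m := by simp at hj; omega
  rw [show m+2-j-1-1 = m-j by omega, show m+2-j-1 = m+1-j by omega,
    show m+2-(j+1) = m+1-j by omega, show m+2-2-j = m-j by omega]
  push_cast [Nat.cast_sub (show j ≤ m+2 by omega), Nat.cast_sub (show j ≤ m+1 by omega)]
  ring

lemma psi2_eq (p q B D : ℝ) (hp : 0 ≤ p) (hq : 0 ≤ q) :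
    0 ≤ ∑ j ∈ range (m+3), coefa R mu (m+2) j *
      (((j:ℝ) * (((j-1 : ℕ):ℝ) * p^(j-1-1) * B) * B * q^(m+2-j)
        + ((j:ℝ) * p^(j-1) * B) * (((m+2-j : ℕ):ℝ) * q^(m+2-j-1) * D))
       + (((j:ℝ) * p^(j-1) * B) * (((m+2-j : ℕ):ℝ) * q^(m+2-j-1) * D)
        + p^j * (((m+2-j : ℕ):ℝ) * (((m+2-j-1 : ℕ):ℝ) * q^(m+2-j-1-1) * D) * D))) := by
  have split : ∀ j ∈ range (m+3), coefa R mu (m+2) j *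
      (((j:ℝ) * (((j-1 : ℕ):ℝ) * p^(j-1-1) * B) * B * q^(m+2-j)
        + ((j:ℝ) * p^(j-1) * B) * (((m+2-j : ℕ):ℝ) * q^(m+2-j-1) * D))
       + (((j:ℝ) * p^(j-1) * B) * (((m+2-j : ℕ):ℝ) * q^(m+2-j-1) * D)
        + p^j * (((m+2-j : ℕ):ℝ) * (((m+2-j-1 : ℕ):ℝ) * q^(m+2-j-1-1) * D) * D)))
      = (coefa R mu (m+2) j * ((j:ℝ) * ((j-1 : ℕ):ℝ) * p^(j-1-1) * q^(m+2-j))) * B^2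
        + (coefa R mu (m+2) j * ((j:ℝ) * ((m+2-j : ℕ):ℝ) * p^(j-1) * q^(m+2-j-1))) * (2*(B*D))
        + (coefa R mu (m+2) j * (((m+2-j : ℕ):ℝ) * ((m+2-j-1 : ℕ):ℝ) * p^j * q^(m+2-j-1-1))) * D^2 := by
    intro j _
    ring
  rw [Finset.sum_congr rfl split, Finset.sum_add_distrib, Finset.sum_add_distrib]
  rw [EAsum hR hmu, EBsum hR hmu, ECsum hR hmu]
  exact quad_nonneg (fxx R mu (m+2) p q) (fxy R mu (m+2) p q) (fyy R mu (m+2) p q) B D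
    (fxx_nonneg hR hmu p q hp hq) (fyy_nonneg hR hmu p q hp hq)
    (det_key hR hmu (show 2 ≤ m+2 by omega) p q hp hq)

end analysis


theorem stmt7 (R mu : ℝ) (hR : 0 < R) (hmu : 0 < mu) (n : ℕ) (hn : 2 ≤ n)
    (X Y : ℝ × ℝ) (hX1 : 0 ≤ X.1) (hX2 : 0 ≤ X.2) (hY1 : 0 ≤ Y.1) (hY2 : 0 ≤ Y.2)
    (t : ℝ) (ht0 : 0 ≤ t) (ht1 : t ≤ 1) :
    Phi R mu n (t • X + (1 - t) • Y) ≤ t * Phi R mu n X + (1 - t) * Phi R mu n Y := by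
  obtain ⟨m, rfl⟩ : ∃ m, n = m + 2 := ⟨n - 2, by omega⟩
  set B := X.1 - Y.1 with hB
  set Dd := X.2 - Y.2 with hDd
  set pf : ℝ → ℝ := fun s => Y.1 + s * B with hpf
  set qf : ℝ → ℝ := fun s => Y.2 + s * Dd with hqf
  set ψ : ℝ → ℝ := fun s => ∑ j ∈ range (m+3),
    coefa R mu (m+2) j * (pf s ^ j * qf s ^ (m+2-j)) with hψ
  set ψ1 : ℝ → ℝ := fun s => ∑ j ∈ range (m+3), coefa R mu (m+2) j *
      (((j:ℝ) * pf s^(j-1) * B) * qf s^(m+2-j)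
        + pf s^j * (((m+2-j : ℕ):ℝ) * qf s^(m+2-j-1) * Dd)) with hψ1
  set ψ2 : ℝ → ℝ := fun s => ∑ j ∈ range (m+3), coefa R mu (m+2) j *
      (((j:ℝ) * (((j-1 : ℕ):ℝ) * pf s^(j-1-1) * B) * B * qf s^(m+2-j)
        + ((j:ℝ) * pf s^(j-1) * B) * (((m+2-j : ℕ):ℝ) * qf s^(m+2-j-1) * Dd))
       + (((j:ℝ) * pf s^(j-1) * B) * (((m+2-j : ℕ):ℝ) * qf s^(m+2-j-1) * Dd)
        + pf s^j * (((m+2-j : ℕ):ℝ) * (((m+2-j-1 : ℕ):ℝ) * qf s^(m+2-j-1-1) * Dd) * Dd))) with hψ2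
  have hpd : ∀ s : ℝ, HasDerivAt pf B s := by
    intro s
    have h := ((hasDerivAt_id s).mul_const B).const_add Y.1
    simpa [hpf] using h
  have hqd : ∀ s : ℝ, HasDerivAt qf Dd s := by
    intro s
    have h := ((hasDerivAt_id s).mul_const Dd).const_add Y.2
    simpa [hqf] using h
  have hd1 : ∀ s : ℝ, HasDerivAt ψ (ψ1 s) s := by
    intro s
    simp only [hψ, hψ1]
    apply HasDerivAt.fun_sum
    intro j _
    have hterm := (((hpd s).pow j).mul ((hqd s).pow (m+2-j))).const_mul (coefa R mu (m+2) j)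
    convert hterm using 1
    all_goals rfl
  have hd2 : ∀ s : ℝ, HasDerivAt ψ1 (ψ2 s) s := by
    intro s
    simp only [hψ1, hψ2]
    apply HasDerivAt.fun_sum
    intro j _
    have c1b := ((((hpd s).pow (j-1)).const_mul ((j:ℕ):ℝ)).mul_const B)
    have t1 := c1b.mul ((hqd s).pow (m+2-j))
    have c4 := ((((hqd s).pow (m+2-j-1)).const_mul ((m+2-j : ℕ):ℝ)).mul_const Dd)
    have t2 := ((hpd s).pow j).mul c4
    have hterm := (t1.add t2).const_mul (coefa R mu (m+2) j)
    convert hterm using 1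
    all_goals rfl
  have hψdiff : Differentiable ℝ ψ := fun s => (hd1 s).differentiableAt
  have hdψ : deriv ψ = ψ1 := funext fun s => (hd1 s).deriv
  have hconv : ConvexOn ℝ (Set.Icc (0:ℝ) 1) ψ := by
    apply convexOn_of_deriv2_nonneg (convex_Icc 0 1) hψdiff.continuous.continuousOn
      (fun x _ => (hd1 x).differentiableAt.differentiableWithinAt) ?_ ?_
    · rw [hdψ]
      exact fun x _ => (hd2 x).differentiableAt.differentiableWithinAt
    · intro x hx
      rw [interior_Icc, Set.mem_Ioo] at hx
      have h2 : deriv^[2] ψ x = ψ2 x := by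
        rw [show deriv^[2] ψ = deriv (deriv ψ) from by
          rw [Function.iterate_succ, Function.iterate_one]; rfl]
        rw [hdψ]
        exact (hd2 x).deriv
      rw [h2]
      have hxp : 0 ≤ pf x := by
        simp only [hpf, hB]
        nlinarith [mul_nonneg (show (0:ℝ) ≤ 1 - x by linarith [hx.2]) hY1,
          mul_nonneg (le_of_lt hx.1) hX1]
      have hxq : 0 ≤ qf x := by
        simp only [hqf, hDd]
        nlinarith [mul_nonneg (show (0:ℝ) ≤ 1 - x by linarith [hx.2]) hY2,
          mul_nonneg (le_of_lt hx.1) hX2]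
      have key := psi2_eq (m := m) hR hmu (pf x) (qf x) B Dd hxp hxq
      simp only [hψ2]
      exact key
  have h1mem : (1:ℝ) ∈ Set.Icc (0:ℝ) 1 := by norm_num
  have h0mem : (0:ℝ) ∈ Set.Icc (0:ℝ) 1 := by norm_num
  have key := hconv.2 h1mem h0mem ht0 (by linarith : (0:ℝ) ≤ 1 - t) (by ring : t + (1-t) = 1)
  simp only [smul_eq_mul, mul_one, mul_zero, add_zero] at key
  have e1 : ψ 1 = Phi R mu (m+2) X := by
    simp only [hψ]
    unfold Phi
    apply Finset.sum_congr rfl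
    intro j _
    simp only [hpf, hqf, hB, hDd]
    rw [show Y.1 + 1 * (X.1 - Y.1) = X.1 by ring, show Y.2 + 1 * (X.2 - Y.2) = X.2 by ring]
    ring
  have e0 : ψ 0 = Phi R mu (m+2) Y := by
    simp only [hψ]
    unfold Phi
    apply Finset.sum_congr rfl
    intro j _
    simp only [hpf, hqf, hB, hDd]
    rw [show Y.1 + 0 * (X.1 - Y.1) = Y.1 by ring, show Y.2 + 0 * (X.2 - Y.2) = Y.2 by ring]
    ring
  have et : Phi R mu (m+2) (t • X + (1-t) • Y) = ψ t := by
    unfold Phi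
    simp only [hψ]
    apply Finset.sum_congr rfl
    intro j _
    have c1 : (t • X + (1-t) • Y).1 = pf t := by
      simp only [hpf, hB, Prod.fst_add, Prod.smul_fst, smul_eq_mul]
      ring
    have c2 : (t • X + (1-t) • Y).2 = qf t := by
      simp only [hqf, hDd, Prod.snd_add, Prod.smul_snd, smul_eq_mul]
      ring
    rw [c1, c2]
    ring
  rw [e1, e0] at key
  rw [et]
  exact key
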